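/- Let M be a Hausdorff topological space and let σ : ℝ → T(M) be a spectral family in the lattice T(M) of open subsets of M, with admissible domain D(σ) and induced function f_σ : D(σ) → ℝ. Define the resolvent set R(σ) := {λ ∈ ℝ | σ is constant on some neighborhood of λ} and the spectrum sp(σ) := ℝ ∖ R(σ). Then sp(σ) equals the closure in ℝ of the image of f_σ. -/

import Mathlib

/-- A spectral family in the lattice `T(M)` of open subsets of a topological
space `M`: open-valued, monotone, right-continuous, with
`interior (⋂ λ, σ λ) = ∅` and `⋃ λ, σ λ = M`. -/
def IsSpectralFamilyOfOpens {M : Type*} [TopologicalSpace M] (σ : ℝ → Set M) : Prop :=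
  (∀ lam : ℝ, IsOpen (σ lam)) ∧ Monotone σ ∧
  (∀ lam : ℝ, σ lam = interior (⋂ mu ∈ Set.Ioi lam, σ mu)) ∧
  interior (⋂ lam : ℝ, σ lam) = ∅ ∧
  (⋃ lam : ℝ, σ lam) = Set.univ

/-- The admissible domain of a spectral family `σ` in `T(M)`:
`D(σ) = M ∖ ⋂ λ, σ λ`. -/
def admDomain {M : Type*} [TopologicalSpace M] (σ : ℝ → Set M) : Set M :=
  (⋂ lam : ℝ, σ lam)ᶜ

/-- The function induced by a spectral family in `T(M)`:
`f_σ(x) = inf {λ | x ∈ σ(λ)}`. -/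
noncomputable def inducedFun {M : Type*} [TopologicalSpace M] (σ : ℝ → Set M) (x : M) : ℝ :=
  sInf {lam : ℝ | x ∈ σ lam}

/-- The spectrum of a spectral family `σ` in `T(M)` (the complement of the set
of `λ` near which `σ` is locally constant) equals the closure of the image of
the induced function `f_σ : D(σ) → ℝ`. -/
theorem stmt17 {M : Type*} [TopologicalSpace M] [T2Space M] (σ : ℝ → Set M)
    (hσ : IsSpectralFamilyOfOpens σ) :
    {lam : ℝ | ∃ U ∈ nhds lam, ∀ mu ∈ U, σ mu = σ lam}ᶜ =
      closure (inducedFun σ '' admDomain σ) := by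
  obtain ⟨hopen, hmono, hrc, hint, hunion⟩ := hσ
  -- basic facts about S x := {l | x ∈ σ l} for x in the admissible domain
  have hSne : ∀ x : M, {l : ℝ | x ∈ σ l}.Nonempty := by
    intro x
    have := Set.eq_univ_iff_forall.mp hunion x
    exact (by simpa [Set.mem_iUnion] using this : ∃ i, x ∈ σ i)
  have hSbdd : ∀ x ∈ admDomain σ, BddBelow {l : ℝ | x ∈ σ l} := by
    intro x hx
    obtain ⟨μ, hμ⟩ : ∃ μ, x ∉ σ μ := by
      by_contra h
      push_neg at h
      exact hx (Set.mem_iInter.mpr h)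
    exact ⟨μ, fun l hl => le_of_not_gt fun hlt => hμ (hmono hlt.le hl)⟩
  have hmem_of_lt : ∀ x : M, ∀ μ : ℝ, x ∈ admDomain σ → inducedFun σ x < μ → x ∈ σ μ := by
    intro x μ hx hlt
    obtain ⟨b, hb, hbl⟩ := (csInf_lt_iff (hSbdd x hx) (hSne x)).mp hlt
    exact hmono hbl.le hb
  have hnot_mem_of_gt : ∀ x : M, ∀ μ : ℝ, x ∈ admDomain σ → μ < inducedFun σ x → x ∉ σ μ := by
    intro x μ hx hlt hmem
    exact absurd (csInf_le (hSbdd x hx) hmem) (not_le.mpr hlt)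
  ext lam
  simp only [Set.mem_compl_iff, Set.mem_setOf_eq]
  rw [← not_iff_not, not_not]
  constructor
  · rintro ⟨U, hU, hconst⟩ hcl
    obtain ⟨ε, hε, hball⟩ := Metric.mem_nhds_iff.mp hU
    rw [Metric.mem_closure_iff] at hcl
    obtain ⟨y, hy, hdist⟩ := hcl ε hε
    obtain ⟨x, hxD, rfl⟩ := hy
    set f := inducedFun σ x with hf
    have hdist' : |f - lam| < ε := by
      rw [Real.dist_eq] at hdist
      rwa [abs_sub_comm]
    obtain ⟨h1', h2'⟩ := abs_lt.mp hdist'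
    have h1 : lam - ε < f := by linarith
    have h2 : f < lam + ε := by linarith
    have hμ1 : x ∉ σ ((lam - ε + f) / 2) :=
      hnot_mem_of_gt x _ hxD (by linarith)
    have hμ2 : x ∈ σ ((f + (lam + ε)) / 2) :=
      hmem_of_lt x _ hxD (by linarith)
    have e1 : σ ((lam - ε + f) / 2) = σ lam := by
      apply hconst
      apply hball
      simp only [Metric.mem_ball, Real.dist_eq, abs_lt]
      constructor <;> linarith
    have e2 : σ ((f + (lam + ε)) / 2) = σ lam := by
      apply hconst
      apply hball
      simp only [Metric.mem_ball, Real.dist_eq, abs_lt]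
      constructor <;> linarith
    exact hμ1 (e1 ▸ e2 ▸ hμ2)
  · intro hcl
    have hop : IsOpen (closure (inducedFun σ '' admDomain σ))ᶜ :=
      isClosed_closure.isOpen_compl
    obtain ⟨ε, hε, hball⟩ := Metric.mem_nhds_iff.mp (hop.mem_nhds hcl)
    have key : ∀ a b : ℝ, a ∈ Metric.ball lam ε → b ∈ Metric.ball lam ε → a ≤ b →
        σ b ⊆ σ a := by
      intro a b ha hb hab x hx
      by_cases hxI : x ∈ ⋂ l : ℝ, σ l
      · exact Set.mem_iInter.mp hxI a
      · have hxD : x ∈ admDomain σ := hxI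
        have hfle : inducedFun σ x ≤ b := csInf_le (hSbdd x hxD) hx
        have hfnot : inducedFun σ x ∉ Metric.ball lam ε := by
          intro hmem
          exact hball hmem (subset_closure ⟨x, hxD, rfl⟩)
        have habs : ε ≤ |inducedFun σ x - lam| := by
          simpa [Metric.mem_ball, Real.dist_eq, not_lt] using hfnot
        have hbb : b < lam + ε := by
          have := abs_lt.mp (by simpa [Real.dist_eq] using hb)
          linarith [this.2]
        have haa : lam - ε < a := by
          have := abs_lt.mp (by simpa [Real.dist_eq] using ha)
          linarith [this.1]
        have hfle' : inducedFun σ x ≤ lam - ε := by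
          rcases abs_cases (inducedFun σ x - lam) with ⟨he, _⟩ | ⟨he, _⟩ <;>
            rw [he] at habs <;> linarith
        exact hmem_of_lt x a hxD (by linarith)
    refine ⟨Metric.ball lam ε, Metric.ball_mem_nhds lam hε, fun μ hμ => ?_⟩
    have hlam : lam ∈ Metric.ball lam ε := Metric.mem_ball_self hε
    rcases le_total μ lam with h | h
    · exact subset_antisymm (hmono h) (key μ lam hμ hlam h)
    · exact subset_antisymm (key lam μ hlam hμ h) (hmono h)
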